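/- Rota's formula for Galois connections: let P and Q be locally finite posets and let f : P → Q, g : Q → P form a Galois connection in the sense that f(p) ≤ q if and only if p ≤ g(q). Then for all p ∈ P and q ∈ Q: Σ_{p' ≥ p, f(p') = q} μ_P(p, p') = Σ_{q' ≤ q, g(q') = p} μ_Q(q', q), where μ_P and μ_Q are the Möbius functions of P and Q. -/
import Mathlib

open scoped Classical

/-- Rota's formula for Galois connections between locally finite posets:
`Σ_{p' ≥ p, f p' = q} μ_P(p, p') = Σ_{q' ≤ q, g q' = p} μ_Q(q', q)`. -/
theorem rota_formula_galois_connection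
    {P Q : Type*} [PartialOrder P] [PartialOrder Q]
    [LocallyFiniteOrder P] [LocallyFiniteOrder Q]
    (f : P → Q) (g : Q → P) (hgc : GaloisConnection f g)
    (p : P) (q : Q)
    (h₁ : {p' : P | p ≤ p' ∧ f p' = q}.Finite)
    (h₂ : {q' : Q | q' ≤ q ∧ g q' = p}.Finite) :
    (∑ᶠ p' ∈ {p' : P | p ≤ p' ∧ f p' = q}, IncidenceAlgebra.mu ℚ p p') =
      ∑ᶠ q' ∈ {q' : Q | q' ≤ q ∧ g q' = p}, IncidenceAlgebra.mu ℚ q' q := by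
  by_cases h : p ≤ g q
  · have hfp : f p ≤ q := hgc.le_iff_le.mpr h
    have hA : {p' : P | p ≤ p' ∧ f p' = q} =
        ↑((Finset.Icc p (g q)).filter (fun p' => f p' = q)) := by
      ext p'
      simp only [Finset.coe_filter, Finset.mem_Icc, Set.mem_setOf_eq]
      constructor
      · rintro ⟨h1, h2⟩; exact ⟨⟨h1, hgc.le_iff_le.mp h2.le⟩, h2⟩
      · rintro ⟨⟨h1, _⟩, h2⟩; exact ⟨h1, h2⟩
    have hB : {q' : Q | q' ≤ q ∧ g q' = p} =
        ↑((Finset.Icc (f p) q).filter (fun q' => g q' = p)) := by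
      ext q'
      simp only [Finset.coe_filter, Finset.mem_Icc, Set.mem_setOf_eq]
      constructor
      · rintro ⟨h1, h2⟩; exact ⟨⟨hgc.le_iff_le.mpr h2.ge, h1⟩, h2⟩
      · rintro ⟨⟨_, h1⟩, h2⟩; exact ⟨h1, h2⟩
    rw [hA, hB, finsum_mem_coe_finset, finsum_mem_coe_finset]
    calc
      ∑ p' ∈ (Finset.Icc p (g q)).filter (fun p' => f p' = q),
          IncidenceAlgebra.mu ℚ p p'
          = ∑ p' ∈ Finset.Icc p (g q),
              if f p' = q then IncidenceAlgebra.mu ℚ p p' else 0 :=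
        Finset.sum_filter _ _
      _ = ∑ p' ∈ Finset.Icc p (g q), ∑ q' ∈ Finset.Icc (f p') q,
            IncidenceAlgebra.mu ℚ p p' * IncidenceAlgebra.mu ℚ q' q := by
        refine Finset.sum_congr rfl fun p' _ => ?_
        rw [← Finset.mul_sum, IncidenceAlgebra.sum_Icc_mu_left, mul_ite, mul_one, mul_zero]
      _ = ∑ p' ∈ Finset.Icc p (g q), ∑ q' ∈ Finset.Icc (f p) q,
            if f p' ≤ q' then IncidenceAlgebra.mu ℚ p p' * IncidenceAlgebra.mu ℚ q' q
            else 0 := by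
        refine Finset.sum_congr rfl fun p' hp' => ?_
        rw [← Finset.sum_filter]
        congr 1
        ext q'
        simp only [Finset.mem_filter, Finset.mem_Icc]
        have hfpf : f p ≤ f p' := hgc.monotone_l (Finset.mem_Icc.mp hp').1
        constructor
        · rintro ⟨h1, h2⟩; exact ⟨⟨hfpf.trans h1, h2⟩, h1⟩
        · rintro ⟨⟨_, h2⟩, h1⟩; exact ⟨h1, h2⟩
      _ = ∑ q' ∈ Finset.Icc (f p) q, ∑ p' ∈ Finset.Icc p (g q),
            if p' ≤ g q' then IncidenceAlgebra.mu ℚ p p' * IncidenceAlgebra.mu ℚ q' q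
            else 0 := by
        rw [Finset.sum_comm]
        refine Finset.sum_congr rfl fun q' _ => Finset.sum_congr rfl fun p' _ => ?_
        rw [hgc.le_iff_le]
      _ = ∑ q' ∈ Finset.Icc (f p) q,
            (∑ p' ∈ Finset.Icc p (g q'), IncidenceAlgebra.mu ℚ p p') *
              IncidenceAlgebra.mu ℚ q' q := by
        refine Finset.sum_congr rfl fun q' hq' => ?_
        rw [Finset.sum_mul]
        rw [← Finset.sum_filter]
        congr 1
        ext p'
        simp only [Finset.mem_filter, Finset.mem_Icc]
        have hg : g q' ≤ g q := hgc.monotone_u (Finset.mem_Icc.mp hq').2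
        constructor
        · rintro ⟨⟨h1, _⟩, h2⟩; exact ⟨h1, h2⟩
        · rintro ⟨h1, h2⟩; exact ⟨⟨h1, h2.trans hg⟩, h2⟩
      _ = ∑ q' ∈ Finset.Icc (f p) q,
            if g q' = p then IncidenceAlgebra.mu ℚ q' q else 0 := by
        refine Finset.sum_congr rfl fun q' _ => ?_
        rw [IncidenceAlgebra.sum_Icc_mu_right, ite_mul, one_mul, zero_mul]
        simp [eq_comm]
      _ = ∑ q' ∈ (Finset.Icc (f p) q).filter (fun q' => g q' = p),
            IncidenceAlgebra.mu ℚ q' q := (Finset.sum_filter _ _).symm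
  · have hA : {p' : P | p ≤ p' ∧ f p' = q} = ∅ := by
      ext p'
      simp only [Set.mem_setOf_eq, Set.mem_empty_iff_false, iff_false, not_and]
      intro h1 h2
      exact h ((h1.trans (hgc.le_iff_le.mp h2.le)))
    have hB : {q' : Q | q' ≤ q ∧ g q' = p} = ∅ := by
      ext q'
      simp only [Set.mem_setOf_eq, Set.mem_empty_iff_false, iff_false, not_and]
      intro h1 h2
      exact h (h2 ▸ hgc.monotone_u h1)
    rw [hA, hB]
    simp
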